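/- Under the mixture observation model, λ_min(H*_SS) ≥ (1−ν)·η(‖v*‖₁) > 0. In particular, the assumption q ∈ (|NE*|/2^n, 1) (equivalently ν < 1) by itself guarantees that the minimum eigenvalue of H*_SS is strictly positive. -/

import Mathlib

/- Common setup: linear influence games (LIGs), the PSNE set, the noisy
observation model, feature vectors, the logistic loss and its gradient,
population/sample Hessian and scatter matrices, and Rayleigh-quotient
encodings of eigenvalue bounds for (symmetric) submatrices.

Joint actions in `{-1,+1}^n` are modeled as `Fin n → Bool` via the sign map
`sgn` (`true ↦ +1`, `false ↦ -1`).  For player `i`, the feature vector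
`z_i(x) = (x_i · x_{-i}, x_i)` and the parameter vector `v_i = (w_{i,-i}, -b_i)`
are indexed by `Fin n`, with the bias coordinate placed at index `i`
(a fixed permutation of the paper's coordinate ordering), so that
`v_i ⬝ᵥ z_i(x) = x_i (∑_{j ≠ i} W i j · x_j - b i)` is player `i`'s payoff. -/

open Matrix Finset

noncomputable section

/-- Sign of a Boolean action: `true ↦ +1`, `false ↦ -1`. -/
def sgn (a : Bool) : ℝ := if a then 1 else -1

/-- Payoff of player `i` at joint action `x` in the LIG `(W, b)`:
`x_i (∑_{j ≠ i} W i j · x_j - b i)`. -/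
def payoff {n : ℕ} (W : Matrix (Fin n) (Fin n) ℝ) (b : Fin n → ℝ)
    (i : Fin n) (x : Fin n → Bool) : ℝ :=
  sgn (x i) * ((∑ j ∈ Finset.univ.erase i, W i j * sgn (x j)) - b i)

/-- The pure-strategy Nash equilibria set `NE(W, b)`. -/
def NEset {n : ℕ} (W : Matrix (Fin n) (Fin n) ℝ) (b : Fin n → ℝ) :
    Finset (Fin n → Bool) :=
  @Finset.filter _ (fun x => ∀ i, 0 ≤ payoff W b i x) (Classical.decPred _)
    Finset.univ

/-- The observation distribution
`p(x) = q·1[x ∈ NE]/|NE| + (1-q)·1[x ∉ NE]/(2^n - |NE|)`. -/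
def pObs {n : ℕ} (q : ℝ) (NE : Finset (Fin n → Bool)) (x : Fin n → Bool) : ℝ :=
  if x ∈ NE then q / (NE.card : ℝ)
  else (1 - q) / ((2 : ℝ) ^ n - (NE.card : ℝ))

/-- The mixture coefficient `ν = (q - c/2^n)/(1 - c/2^n)`, where `c = |NE*|`. -/
def mixCoef (n : ℕ) (q : ℝ) (c : ℕ) : ℝ :=
  (q - (c : ℝ) / (2 : ℝ) ^ n) / (1 - (c : ℝ) / (2 : ℝ) ^ n)

/-- Feature vector `z_i(x) = (x_i·x_{-i}, x_i)` (bias coordinate at index `i`). -/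
def zvec {n : ℕ} (i : Fin n) (x : Fin n → Bool) : Fin n → ℝ :=
  fun j => if j = i then sgn (x i) else sgn (x i) * sgn (x j)

/-- Parameter vector `v_i = (w_{i,-i}, -b_i)` (bias coordinate at index `i`). -/
def vvec {n : ℕ} (W : Matrix (Fin n) (Fin n) ℝ) (b : Fin n → ℝ) (i : Fin n) :
    Fin n → ℝ :=
  fun j => if j = i then -b i else W i j

/-- Support `S = {j : v_j ≠ 0}` of a vector. -/
def supp {n : ℕ} (v : Fin n → ℝ) : Finset (Fin n) :=
  @Finset.filter _ (fun j => v j ≠ 0) (Classical.decPred _) Finset.univ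

/-- `η(s) = 1/(e^{s/2} + e^{-s/2})²`. -/
def eta (s : ℝ) : ℝ := 1 / (Real.exp (s / 2) + Real.exp (-s / 2)) ^ 2

/-- Logistic loss `ℓ_i(v, D) = (1/m) ∑_l log(1 + exp(-vᵀ z_i(x⁽ˡ⁾)))`. -/
def loss {n m : ℕ} (i : Fin n) (v : Fin n → ℝ)
    (D : Fin m → (Fin n → Bool)) : ℝ :=
  (1 / (m : ℝ)) * ∑ l, Real.log (1 + Real.exp (-(v ⬝ᵥ zvec i (D l))))

/-- Gradient of the logistic loss,
`∇ℓ(v, D) = (1/m) ∑_l (-z⁽ˡ⁾)/(1 + exp(vᵀ z⁽ˡ⁾))`. -/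
def gradLoss {n m : ℕ} (i : Fin n) (v : Fin n → ℝ)
    (D : Fin m → (Fin n → Bool)) : Fin n → ℝ :=
  fun j => (1 / (m : ℝ)) *
    ∑ l, -(zvec i (D l) j) / (1 + Real.exp (v ⬝ᵥ zvec i (D l)))

/-- ℓ1 norm `‖v‖₁ = ∑_j |v_j|`. -/
def norm1 {n : ℕ} (v : Fin n → ℝ) : ℝ := ∑ j, |v j|

/-- Quadratic form `yᵀ M y`. -/
def quadForm {n : ℕ} (M : Matrix (Fin n) (Fin n) ℝ) (y : Fin n → ℝ) : ℝ :=
  y ⬝ᵥ M.mulVec y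

/-- `λ_min(M_SS) ≥ c`, encoded via the Rayleigh quotient over vectors
supported on `S` (exactly equivalent for symmetric `M`). -/
def minEigSubGE {n : ℕ} (M : Matrix (Fin n) (Fin n) ℝ) (S : Finset (Fin n))
    (c : ℝ) : Prop :=
  ∀ y : Fin n → ℝ, (∀ j ∉ S, y j = 0) → c * (∑ j, y j ^ 2) ≤ quadForm M y

/-- `λ_min(M_SS) > c` (Rayleigh form; equivalent for symmetric `M` since the
unit sphere of the finite-dimensional subspace is compact). -/
def minEigSubGT {n : ℕ} (M : Matrix (Fin n) (Fin n) ℝ) (S : Finset (Fin n))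
    (c : ℝ) : Prop :=
  ∀ y : Fin n → ℝ, (∀ j ∉ S, y j = 0) → y ≠ 0 →
    c * (∑ j, y j ^ 2) < quadForm M y

/-- `λ_max(M_SS) ≤ c` (Rayleigh form). -/
def maxEigSubLE {n : ℕ} (M : Matrix (Fin n) (Fin n) ℝ) (S : Finset (Fin n))
    (c : ℝ) : Prop :=
  ∀ y : Fin n → ℝ, (∀ j ∉ S, y j = 0) → quadForm M y ≤ c * (∑ j, y j ^ 2)

/-- `λ_max(M_SS) < c` (Rayleigh form). -/
def maxEigSubLT {n : ℕ} (M : Matrix (Fin n) (Fin n) ℝ) (S : Finset (Fin n))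
    (c : ℝ) : Prop :=
  ∀ y : Fin n → ℝ, (∀ j ∉ S, y j = 0) → y ≠ 0 →
    quadForm M y < c * (∑ j, y j ^ 2)

/-- `λ_max(M_SS) ≥ c` (Rayleigh form: some nonzero supported vector attains it). -/
def maxEigSubGE {n : ℕ} (M : Matrix (Fin n) (Fin n) ℝ) (S : Finset (Fin n))
    (c : ℝ) : Prop :=
  ∃ y : Fin n → ℝ, (∀ j ∉ S, y j = 0) ∧ y ≠ 0 ∧
    c * (∑ j, y j ^ 2) ≤ quadForm M y

/-- Population Hessian `H*_i = E_{x∼p}[η(vᵀz_i(x)) z_i(x) z_i(x)ᵀ]`. -/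
def popHess {n : ℕ} (q : ℝ) (NE : Finset (Fin n → Bool)) (i : Fin n)
    (v : Fin n → ℝ) : Matrix (Fin n) (Fin n) ℝ :=
  ∑ x : Fin n → Bool,
    (pObs q NE x * eta (v ⬝ᵥ zvec i x)) • vecMulVec (zvec i x) (zvec i x)

/-- Population scatter matrix `E_{x∼p}[z_i(x) z_i(x)ᵀ]`. -/
def popScatter {n : ℕ} (q : ℝ) (NE : Finset (Fin n → Bool)) (i : Fin n) :
    Matrix (Fin n) (Fin n) ℝ :=
  ∑ x : Fin n → Bool, pObs q NE x • vecMulVec (zvec i x) (zvec i x)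

/-- Sample Hessian `H^m = (1/m) ∑_l η(vᵀz⁽ˡ⁾) z⁽ˡ⁾ (z⁽ˡ⁾)ᵀ`. -/
def sampleHess {n m : ℕ} (i : Fin n) (v : Fin n → ℝ)
    (D : Fin m → (Fin n → Bool)) : Matrix (Fin n) (Fin n) ℝ :=
  (1 / (m : ℝ)) •
    ∑ l, eta (v ⬝ᵥ zvec i (D l)) • vecMulVec (zvec i (D l)) (zvec i (D l))

/-- Sample scatter matrix `(1/m) ∑_l z⁽ˡ⁾ (z⁽ˡ⁾)ᵀ`. -/
def sampleScatter {n m : ℕ} (i : Fin n) (D : Fin m → (Fin n → Bool)) :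
    Matrix (Fin n) (Fin n) ℝ :=
  (1 / (m : ℝ)) • ∑ l, vecMulVec (zvec i (D l)) (zvec i (D l))

/-- Probability of the event `E` under `m` i.i.d. draws from `p`. -/
def iidProb {X : Type*} [Fintype X] (p : X → ℝ) (m : ℕ)
    (E : Set (Fin m → X)) : ℝ :=
  ∑ D : Fin m → X, E.indicator (fun D => ∏ l, p (D l)) D

/-- `ρ` is the minimum payoff over the PSNE set of `(W, b)`. -/
def isMinPayoff {n : ℕ} (W : Matrix (Fin n) (Fin n) ℝ) (b : Fin n → ℝ)
    (ρ : ℝ) : Prop :=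
  IsLeast {r : ℝ | ∃ x ∈ NEset W b, ∃ i, r = payoff W b i x} ρ


/-! ### Auxiliary lemmas -/

lemma sgn_mul_self (a : Bool) : sgn a * sgn a = 1 := by cases a <;> norm_num [sgn]

lemma sgn_not (a : Bool) : sgn (!a) = - sgn a := by cases a <;> norm_num [sgn]

lemma abs_sgn (a : Bool) : |sgn a| = 1 := by cases a <;> norm_num [sgn]

lemma zvec_sq {n : ℕ} (i j : Fin n) (x : Fin n → Bool) :
    zvec i x j * zvec i x j = 1 := by
  unfold zvec
  split_ifs
  · exact sgn_mul_self _
  · have h1 := sgn_mul_self (x i)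
    have h2 := sgn_mul_self (x j)
    nlinarith

lemma eta_pos (s : ℝ) : 0 < eta s := by
  unfold eta
  positivity

lemma two_cosh (s : ℝ) : Real.exp (s / 2) + Real.exp (-s / 2) = 2 * Real.cosh (s / 2) := by
  rw [Real.cosh_eq]
  ring_nf

lemma eta_anti {s r : ℝ} (h : |s| ≤ r) : eta r ≤ eta s := by
  have hr : 0 ≤ r := le_trans (abs_nonneg s) h
  have h1 : (0:ℝ) < Real.exp (s / 2) + Real.exp (-s / 2) := by positivity
  have h2 : (0:ℝ) < Real.exp (r / 2) + Real.exp (-r / 2) := by positivity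
  have hc : Real.cosh (s / 2) ≤ Real.cosh (r / 2) := by
    rw [Real.cosh_le_cosh]
    rw [abs_div, abs_div]
    have : |s| ≤ |r| := by rwa [abs_of_nonneg hr]
    exact div_le_div_of_nonneg_right this (by norm_num) |>.trans_eq (by norm_num)
  have hle : Real.exp (s / 2) + Real.exp (-s / 2)
      ≤ Real.exp (r / 2) + Real.exp (-r / 2) := by
    rw [two_cosh, two_cosh]; linarith
  unfold eta
  apply one_div_le_one_div_of_le (by positivity)
  exact pow_le_pow_left₀ h1.le hle 2

lemma sum_flip_zero {n : ℕ} (t : Fin n) (f : (Fin n → Bool) → ℝ)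
    (hf : ∀ x, f (Function.update x t (!(x t))) = - f x) :
    ∑ x : Fin n → Bool, f x = 0 := by
  have hinv : Function.Involutive
      (fun x : Fin n → Bool => Function.update x t (!(x t))) := by
    intro x
    funext a
    by_cases h : a = t
    · subst h; simp
    · simp [Function.update_of_ne h]
  have h1 : ∑ x : Fin n → Bool, f (Function.update x t (!(x t)))
      = ∑ x : Fin n → Bool, f x := hinv.bijective.sum_comp f
  have h2 : ∑ x : Fin n → Bool, f (Function.update x t (!(x t)))
      = ∑ x : Fin n → Bool, (- f x) := by
    exact Finset.sum_congr rfl (fun x _ => hf x)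
  rw [h2, Finset.sum_neg_distrib] at h1
  linarith

lemma sum_zvec_orth {n : ℕ} (i j k : Fin n) (hjk : j ≠ k) :
    ∑ x : Fin n → Bool, zvec i x j * zvec i x k = 0 := by
  by_cases hj : j = i
  · subst hj
    have hki : k ≠ j := hjk.symm
    apply sum_flip_zero k
    intro x
    have hxi : Function.update x k (!(x k)) j = x j := Function.update_of_ne hjk _ _
    have hxk : Function.update x k (!(x k)) k = !(x k) := Function.update_self _ _ _
    simp only [zvec, if_pos rfl, if_neg hki, hxi, hxk, sgn_not]
    ring
  · apply sum_flip_zero j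
    intro x
    have hxi : Function.update x j (!(x j)) i = x i :=
      Function.update_of_ne (fun h => hj h.symm) _ _
    have hxj : Function.update x j (!(x j)) j = !(x j) := Function.update_self _ _ _
    by_cases hk : k = i
    · subst hk
      simp only [zvec, if_neg hj, if_pos rfl, hxi, hxj, sgn_not]
      ring
    · have hxk : Function.update x j (!(x j)) k = x k :=
        Function.update_of_ne (fun h => hjk h.symm) _ _
      simp only [zvec, if_neg hj, if_neg hk, hxi, hxj, hxk, sgn_not]
      ring

lemma sum_zvec_diag {n : ℕ} (i j : Fin n) :
    ∑ x : Fin n → Bool, zvec i x j * zvec i x j = (2:ℝ) ^ n := by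
  have : ∀ x : Fin n → Bool, zvec i x j * zvec i x j = (1:ℝ) := zvec_sq i j
  rw [Finset.sum_congr rfl (fun x _ => this x)]
  simp [Finset.card_univ]

lemma sum_dot_sq {n : ℕ} (i : Fin n) (y : Fin n → ℝ) :
    ∑ x : Fin n → Bool, (y ⬝ᵥ zvec i x) ^ 2 = (2:ℝ) ^ n * ∑ j, y j ^ 2 := by
  have expand : ∀ x : Fin n → Bool, (y ⬝ᵥ zvec i x) ^ 2
      = ∑ j, ∑ k, y j * y k * (zvec i x j * zvec i x k) := by
    intro x
    rw [sq, dotProduct, Finset.sum_mul_sum]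
    exact Finset.sum_congr rfl fun j _ => Finset.sum_congr rfl fun k _ => by ring
  rw [Finset.sum_congr rfl (fun x _ => expand x), Finset.sum_comm]
  have : ∀ j : Fin n, ∑ x : Fin n → Bool, ∑ k, y j * y k * (zvec i x j * zvec i x k)
      = (2:ℝ) ^ n * y j ^ 2 := by
    intro j
    rw [Finset.sum_comm]
    have hterm : ∀ k : Fin n, ∑ x : Fin n → Bool, y j * y k * (zvec i x j * zvec i x k)
        = if k = j then (2:ℝ) ^ n * y j ^ 2 else 0 := by
      intro k
      rw [← Finset.mul_sum]
      by_cases hk : k = j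
      · subst hk
        rw [sum_zvec_diag, if_pos rfl]
        ring
      · rw [sum_zvec_orth i j k (fun h => hk h.symm), if_neg hk, mul_zero]
    rw [Finset.sum_congr rfl (fun k _ => hterm k), Finset.sum_ite_eq' Finset.univ j
      (fun _ => (2:ℝ) ^ n * y j ^ 2)]
    simp
  rw [Finset.sum_congr rfl (fun j _ => this j), ← Finset.mul_sum]

lemma abs_zvec {n : ℕ} (i j : Fin n) (x : Fin n → Bool) : |zvec i x j| = 1 := by
  unfold zvec
  split_ifs
  · exact abs_sgn _
  · rw [abs_mul, abs_sgn, abs_sgn, one_mul]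

lemma abs_dot_le_norm1 {n : ℕ} (i : Fin n) (v : Fin n → ℝ) (x : Fin n → Bool) :
    |v ⬝ᵥ zvec i x| ≤ norm1 v := by
  rw [dotProduct, norm1]
  refine le_trans (Finset.abs_sum_le_sum_abs _ _) (Finset.sum_le_sum fun j _ => ?_)
  rw [abs_mul, abs_zvec, mul_one]

lemma quadForm_popHess {n : ℕ} (q : ℝ) (NE : Finset (Fin n → Bool)) (i : Fin n)
    (v y : Fin n → ℝ) :
    quadForm (popHess q NE i v) y
      = ∑ x : Fin n → Bool, (pObs q NE x * eta (v ⬝ᵥ zvec i x)) * (y ⬝ᵥ zvec i x) ^ 2 := by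
  unfold quadForm popHess mulVec dotProduct
  simp only [Matrix.sum_apply, Matrix.smul_apply, vecMulVec_apply, smul_eq_mul,
    Finset.mul_sum, Finset.sum_mul]
  conv_lhs => enter [2, j]; rw [Finset.sum_comm]
  rw [Finset.sum_comm]
  refine Finset.sum_congr rfl fun x _ => ?_
  rw [sq, Finset.sum_mul_sum, Finset.mul_sum]
  refine Finset.sum_congr rfl fun j _ => ?_
  rw [Finset.mul_sum]
  refine Finset.sum_congr rfl fun k _ => ?_
  ring

/-- under the mixture observation model,
`λ_min(H*_SS) ≥ (1-ν)·η(‖v*‖₁) > 0`; in particular `q ∈ (|NE*|/2^n, 1)`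
(equivalently `ν < 1`) by itself makes `λ_min(H*_SS)` strictly positive. -/
theorem population_hessian_min_eig_positive
    (n : ℕ) (W : Matrix (Fin n) (Fin n) ℝ) (b : Fin n → ℝ)
    (hdiag : ∀ i, W i i = 0) (q : ℝ)
    (hNE1 : 1 ≤ (NEset W b).card) (hNE2 : (NEset W b).card < 2 ^ n)
    (hq1 : ((NEset W b).card : ℝ) / (2 : ℝ) ^ n < q) (hq2 : q < 1)
    (i : Fin n) :
    minEigSubGE (popHess q (NEset W b) i (vvec W b i)) (supp (vvec W b i))
        ((1 - mixCoef n q (NEset W b).card) * eta (norm1 (vvec W b i))) ∧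
      0 < (1 - mixCoef n q (NEset W b).card) * eta (norm1 (vvec W b i)) := by
  set NE := NEset W b with hNE
  set c := NE.card with hc
  set v := vvec W b i with hv
  have h2n : (0:ℝ) < (2:ℝ) ^ n := by positivity
  have hc1 : (1:ℝ) ≤ (c:ℝ) := by exact_mod_cast hNE1
  have hclt : (c:ℝ) < (2:ℝ) ^ n := by
    have : ((c:ℕ):ℝ) < ((2^n : ℕ):ℝ) := by exact_mod_cast hNE2
    simpa [Nat.cast_pow] using this
  have ht1 : (c:ℝ) / (2:ℝ) ^ n < 1 := (div_lt_one h2n).2 hclt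
  have ht0 : 0 < (c:ℝ) / (2:ℝ) ^ n := div_pos (by linarith) h2n
  have hmix : 1 - mixCoef n q c = (1 - q) / (1 - (c:ℝ) / (2:ℝ) ^ n) := by
    have hd2 : (1:ℝ) - (c:ℝ) / (2:ℝ) ^ n ≠ 0 := by linarith
    unfold mixCoef
    rw [eq_div_iff hd2, sub_mul, one_mul, div_mul_cancel₀ _ hd2]
    ring
  have hmixpos : 0 < 1 - mixCoef n q c := by
    rw [hmix]; exact div_pos (by linarith) (by linarith)
  have hetapos := eta_pos (norm1 v)
  refine ⟨?_, mul_pos hmixpos hetapos⟩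
  -- lower bound on pObs
  have hpObs : ∀ x : Fin n → Bool,
      (1 - mixCoef n q c) / (2:ℝ) ^ n ≤ pObs q NE x := by
    intro x
    have heq : (1 - mixCoef n q c) / (2:ℝ) ^ n = (1 - q) / ((2:ℝ) ^ n - (c:ℝ)) := by
      rw [hmix, div_div]
      congr 1
      field_simp
    rw [heq]
    unfold pObs
    split_ifs with hx
    · rw [div_le_div_iff₀ (by linarith) (by linarith)]
      have hq2n : (c:ℝ) < q * (2:ℝ) ^ n := by
        have := (div_lt_iff₀ h2n).1 hq1
        linarith
      nlinarith
    · exact le_refl _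
  -- lower bound on eta
  have heta : ∀ x : Fin n → Bool, eta (norm1 v) ≤ eta (v ⬝ᵥ zvec i x) :=
    fun x => eta_anti (abs_dot_le_norm1 i v x)
  intro y _
  rw [quadForm_popHess]
  have hbound : ∀ x : Fin n → Bool,
      ((1 - mixCoef n q c) * eta (norm1 v)) / (2:ℝ) ^ n * (y ⬝ᵥ zvec i x) ^ 2
        ≤ (pObs q NE x * eta (v ⬝ᵥ zvec i x)) * (y ⬝ᵥ zvec i x) ^ 2 := by
    intro x
    refine mul_le_mul_of_nonneg_right ?_ (sq_nonneg _)
    have h1 : ((1 - mixCoef n q c) * eta (norm1 v)) / (2:ℝ) ^ n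
        = ((1 - mixCoef n q c) / (2:ℝ) ^ n) * eta (norm1 v) := by ring
    rw [h1]
    exact mul_le_mul (hpObs x) (heta x) hetapos.le
      (le_trans (le_of_lt (div_pos hmixpos h2n)) (hpObs x))
  calc (1 - mixCoef n q c) * eta (norm1 v) * ∑ j, y j ^ 2
      = ∑ x : Fin n → Bool,
        ((1 - mixCoef n q c) * eta (norm1 v)) / (2:ℝ) ^ n * (y ⬝ᵥ zvec i x) ^ 2 := by
        rw [← Finset.mul_sum, sum_dot_sq]
        field_simp
    _ ≤ ∑ x : Fin n → Bool,
        (pObs q NE x * eta (v ⬝ᵥ zvec i x)) * (y ⬝ᵥ zvec i x) ^ 2 :=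
        Finset.sum_le_sum fun x _ => hbound x
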